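/- Let K ⊆ ℝ be compact and f₁,…,f_m: K → K continuous functions such that for every infinite sequence a₁a₂a₃… ∈ {1,…,m}^ω, the diameter of f_{a₁}∘f_{a₂}∘…∘f_{a_n}(K) tends to 0 as n → ∞. Then there exists a continuous metric d: K×K → [0,∞) such that each f_i is d-contracting, i.e., for all x ≠ y in K, d(f_i(x), f_i(y)) < d(x, y). -/

import Mathlib

open Filter Topology

/-- Composition `f_{a₁} ∘ f_{a₂} ∘ … ∘ f_{a_n}` of a family of maps along a finite word. -/
def wordComp {I : Type*} (f : I → ℝ → ℝ) : List I → ℝ → ℝ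
  | [] => id
  | a :: t => f a ∘ wordComp f t

set_option maxHeartbeats 1000000

lemma wordComp_append {I : Type*} (f : I → ℝ → ℝ) (l₁ l₂ : List I) :
    wordComp f (l₁ ++ l₂) = wordComp f l₁ ∘ wordComp f l₂ := by
  induction l₁ with
  | nil => rfl
  | cons a t ih =>
      show f a ∘ wordComp f (t ++ l₂) = (f a ∘ wordComp f t) ∘ wordComp f l₂
      rw [ih]; rfl

lemma wordComp_mapsTo {I : Type*} {K : Set ℝ} {f : I → ℝ → ℝ}
    (hfm : ∀ i, Set.MapsTo (f i) K K) (l : List I) :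
    Set.MapsTo (wordComp f l) K K := by
  induction l with
  | nil => exact fun x hx => hx
  | cons a t ih => exact (hfm a).comp ih

lemma wordComp_continuousOn {I : Type*} {K : Set ℝ} {f : I → ℝ → ℝ}
    (hfc : ∀ i, ContinuousOn (f i) K) (hfm : ∀ i, Set.MapsTo (f i) K K) (l : List I) :
    ContinuousOn (wordComp f l) K := by
  induction l with
  | nil => exact continuousOn_id
  | cons a t ih => exact (hfc a).comp ih (wordComp_mapsTo hfm t)

lemma continuousOn_finset_sup' {α ι : Type*} [TopologicalSpace α] {s : Set α}
    {F : Finset ι} (hF : F.Nonempty) {g : ι → α → ℝ}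
    (hg : ∀ w ∈ F, ContinuousOn (g w) s) :
    ContinuousOn (fun p => F.sup' hF fun w => g w p) s := by
  induction hF using Finset.Nonempty.cons_induction with
  | singleton a => exact hg a (by simp)
  | cons a F ha hF ih =>
      simp only [Finset.sup'_cons, hF]
      exact (hg a (by simp)).sup (ih fun w hw => hg w (by simp [hw]))

namespace ECMAux

variable {I : Type*} [Fintype I] [Nonempty I]

/-- max over words of length `n` of `|f_w x - f_w y|`. -/
noncomputable def Gs (f : I → ℝ → ℝ) (n : ℕ) (x y : ℝ) : ℝ :=
  Finset.univ.sup' Finset.univ_nonempty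
    fun w : Fin n → I => |wordComp f (List.ofFn w) x - wordComp f (List.ofFn w) y|

/-- max over words of length `n` of `diam (f_w '' K)`. -/
noncomputable def Ds (f : I → ℝ → ℝ) (K : Set ℝ) (n : ℕ) : ℝ :=
  Finset.univ.sup' Finset.univ_nonempty
    fun w : Fin n → I => Metric.diam (wordComp f (List.ofFn w) '' K)

lemma le_Gs (f : I → ℝ → ℝ) {n : ℕ} (w : Fin n → I) (x y : ℝ) :
    |wordComp f (List.ofFn w) x - wordComp f (List.ofFn w) y| ≤ Gs f n x y := by
  unfold Gs
  exact Finset.le_sup' (fun w : Fin n → I => |wordComp f (List.ofFn w) x - wordComp f (List.ofFn w) y|) (Finset.mem_univ w)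

lemma Gs_le {f : I → ℝ → ℝ} {n : ℕ} {x y c : ℝ}
    (h : ∀ w : Fin n → I,
      |wordComp f (List.ofFn w) x - wordComp f (List.ofFn w) y| ≤ c) :
    Gs f n x y ≤ c := by
  unfold Gs; exact Finset.sup'_le _ _ fun w _ => h w

lemma le_Ds (f : I → ℝ → ℝ) (K : Set ℝ) {n : ℕ} (w : Fin n → I) :
    Metric.diam (wordComp f (List.ofFn w) '' K) ≤ Ds f K n := by
  unfold Ds
  exact Finset.le_sup' (fun w : Fin n → I => Metric.diam (wordComp f (List.ofFn w) '' K)) (Finset.mem_univ w)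

lemma Ds_le {f : I → ℝ → ℝ} {K : Set ℝ} {n : ℕ} {c : ℝ}
    (h : ∀ w : Fin n → I, Metric.diam (wordComp f (List.ofFn w) '' K) ≤ c) :
    Ds f K n ≤ c := by
  unfold Ds; exact Finset.sup'_le _ _ fun w _ => h w

lemma Gs_nonneg (f : I → ℝ → ℝ) (n : ℕ) (x y : ℝ) : 0 ≤ Gs f n x y :=
  le_trans (abs_nonneg _) (le_Gs f (Classical.arbitrary _) x y)

lemma Ds_nonneg (f : I → ℝ → ℝ) (K : Set ℝ) (n : ℕ) : 0 ≤ Ds f K n :=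
  le_trans Metric.diam_nonneg (le_Ds f K (Classical.arbitrary (Fin n → I)))

lemma Gs_symm (f : I → ℝ → ℝ) (n : ℕ) (x y : ℝ) : Gs f n x y = Gs f n y x := by
  unfold Gs; exact Finset.sup'_congr _ rfl fun w _ => abs_sub_comm _ _

lemma Gs_self (f : I → ℝ → ℝ) (n : ℕ) (x : ℝ) : Gs f n x x = 0 :=
  le_antisymm (Gs_le fun w => by simp) (Gs_nonneg f n x x)

lemma Gs_zero (f : I → ℝ → ℝ) (x y : ℝ) : Gs f 0 x y = |x - y| := by
  apply le_antisymm
  · exact Gs_le fun w => by simp [List.ofFn_zero, wordComp]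
  · have := le_Gs f (Classical.arbitrary (Fin 0 → I)) x y
    simpa [List.ofFn_zero, wordComp] using this

lemma ofFn_eq_append {n : ℕ} (w : Fin (n + 1) → I) :
    List.ofFn w = (List.ofFn fun j : Fin n => w j.castSucc) ++ [w (Fin.last n)] := by
  rw [List.ofFn_succ']
  simp [List.concat_eq_append]

lemma wordComp_snoc (f : I → ℝ → ℝ) {n : ℕ} (w : Fin n → I) (i : I) (x : ℝ) :
    wordComp f (List.ofFn w) (f i x) =
      wordComp f (List.ofFn (Fin.snoc w i : Fin (n + 1) → I)) x := by
  have h1 : List.ofFn (Fin.snoc w i : Fin (n + 1) → I) = List.ofFn w ++ [i] := by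
    rw [ofFn_eq_append]
    simp
  rw [h1, wordComp_append]
  rfl

lemma Gs_contract (f : I → ℝ → ℝ) (n : ℕ) (i : I) (x y : ℝ) :
    Gs f n (f i x) (f i y) ≤ Gs f (n + 1) x y := by
  apply Gs_le
  intro w
  rw [wordComp_snoc f w i x, wordComp_snoc f w i y]
  exact le_Gs f (Fin.snoc w i : Fin (n + 1) → I) x y

lemma Gs_le_Ds {f : I → ℝ → ℝ} {K : Set ℝ} (hKb : Bornology.IsBounded K)
    (hfm : ∀ i, Set.MapsTo (f i) K K) {n : ℕ} {x y : ℝ} (hx : x ∈ K) (hy : y ∈ K) :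
    Gs f n x y ≤ Ds f K n := by
  apply Gs_le
  intro w
  have h1 : |wordComp f (List.ofFn w) x - wordComp f (List.ofFn w) y| ≤
      Metric.diam (wordComp f (List.ofFn w) '' K) := by
    rw [← Real.dist_eq]
    exact Metric.dist_le_diam_of_mem
      (hKb.subset (wordComp_mapsTo hfm _).image_subset) ⟨x, hx, rfl⟩ ⟨y, hy, rfl⟩
  exact le_trans h1 (le_Ds f K w)

lemma Ds_antitone {f : I → ℝ → ℝ} {K : Set ℝ} (hKb : Bornology.IsBounded K)
    (hfm : ∀ i, Set.MapsTo (f i) K K) : Antitone (Ds f K) := by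
  apply antitone_nat_of_succ_le
  intro n
  apply Ds_le
  intro w
  have hsub : wordComp f (List.ofFn w) '' K ⊆
      wordComp f (List.ofFn fun j : Fin n => w j.castSucc) '' K := by
    rw [ofFn_eq_append w, wordComp_append, Set.image_comp]
    exact Set.image_mono (wordComp_mapsTo hfm _).image_subset
  have hmono := Metric.diam_mono hsub
    (hKb.subset (wordComp_mapsTo hfm (List.ofFn fun j : Fin n => w j.castSucc)).image_subset)
  exact le_trans hmono (le_Ds f K _)

lemma Gs_triangle (f : I → ℝ → ℝ) (n : ℕ) (x y z : ℝ) :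
    Gs f n x z ≤ Gs f n x y + Gs f n y z := by
  apply Gs_le
  intro w
  calc |wordComp f (List.ofFn w) x - wordComp f (List.ofFn w) z|
      ≤ |wordComp f (List.ofFn w) x - wordComp f (List.ofFn w) y| +
        |wordComp f (List.ofFn w) y - wordComp f (List.ofFn w) z| := abs_sub_le _ _ _
    _ ≤ Gs f n x y + Gs f n y z := add_le_add (le_Gs f w x y) (le_Gs f w y z)

lemma Gs_continuousOn {f : I → ℝ → ℝ} {K : Set ℝ}
    (hfc : ∀ i, ContinuousOn (f i) K) (hfm : ∀ i, Set.MapsTo (f i) K K) (n : ℕ) :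
    ContinuousOn (fun p : ℝ × ℝ => Gs f n p.1 p.2) (K ×ˢ K) := by
  unfold Gs
  apply continuousOn_finset_sup' Finset.univ_nonempty
  intro w _
  have h1 : ContinuousOn (fun p : ℝ × ℝ => wordComp f (List.ofFn w) p.1) (K ×ˢ K) :=
    (wordComp_continuousOn hfc hfm _).comp continuousOn_fst
      fun p hp => (Set.mem_prod.mp hp).1
  have h2 : ContinuousOn (fun p : ℝ × ℝ => wordComp f (List.ofFn w) p.2) (K ×ˢ K) :=
    (wordComp_continuousOn hfc hfm _).comp continuousOn_snd
      fun p hp => (Set.mem_prod.mp hp).2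
  exact (h1.sub h2).abs

lemma diam_step {f : I → ℝ → ℝ} {K : Set ℝ} (hKb : Bornology.IsBounded K)
    (hfm : ∀ i, Set.MapsTo (f i) K K) {n : ℕ} (w : Fin (n + 1) → I) :
    Metric.diam (wordComp f (List.ofFn w) '' K) ≤
      Metric.diam (wordComp f (List.ofFn fun j : Fin n => w j.castSucc) '' K) := by
  have hsub : wordComp f (List.ofFn w) '' K ⊆
      wordComp f (List.ofFn fun j : Fin n => w j.castSucc) '' K := by
    rw [ofFn_eq_append w, wordComp_append, Set.image_comp]
    exact Set.image_mono (wordComp_mapsTo hfm _).image_subset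
  exact Metric.diam_mono hsub
    (hKb.subset (wordComp_mapsTo hfm (List.ofFn fun j : Fin n => w j.castSucc)).image_subset)

lemma Ds_tendsto {f : I → ℝ → ℝ} {K : Set ℝ} (hK : IsCompact K)
    (hfm : ∀ i, Set.MapsTo (f i) K K)
    (hdiam : ∀ a : ℕ → I,
      Filter.Tendsto (fun n : ℕ =>
        Metric.diam (wordComp f (List.ofFn fun i : Fin n => a i) '' K))
        Filter.atTop (nhds 0)) :
    Filter.Tendsto (Ds f K) Filter.atTop (nhds 0) := by
  classical
  have hanti := Ds_antitone hK.isBounded hfm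
  rw [Metric.tendsto_atTop]
  intro ε hε
  suffices h : ∃ N, Ds f K N < ε by
    obtain ⟨N, hN⟩ := h
    refine ⟨N, fun n hn => ?_⟩
    rw [Real.dist_eq, sub_zero, abs_of_nonneg (Ds_nonneg f K n)]
    exact lt_of_le_of_lt (hanti hn) hN
  by_contra hcon
  push_neg at hcon
  letI : TopologicalSpace I := ⊥
  haveI : DiscreteTopology I := ⟨rfl⟩
  haveI : CompactSpace I := Finite.compactSpace
  have hCcl : ∀ n : ℕ, IsClosed {a : ℕ → I |
      ε ≤ Metric.diam (wordComp f (List.ofFn fun j : Fin n => a j) '' K)} := by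
    intro n
    have hcont : Continuous (fun a : ℕ → I => (fun j : Fin n => a j)) :=
      continuous_pi fun j => continuous_apply _
    exact (isClosed_discrete {v : Fin n → I |
      ε ≤ Metric.diam (wordComp f (List.ofFn v) '' K)}).preimage hcont
  have hCne : ∀ n : ℕ, ({a : ℕ → I |
      ε ≤ Metric.diam (wordComp f (List.ofFn fun j : Fin n => a j) '' K)}).Nonempty := by
    intro n
    obtain ⟨w, -, hw⟩ := Finset.exists_mem_eq_sup' Finset.univ_nonempty
      (fun w : Fin n → I => Metric.diam (wordComp f (List.ofFn w) '' K))
    refine ⟨fun m => if h : m < n then w ⟨m, h⟩ else Classical.arbitrary I, ?_⟩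
    have heq : (fun j : Fin n =>
        if h : (j : ℕ) < n then w ⟨(j : ℕ), h⟩ else Classical.arbitrary I) = w := by
      funext j
      rw [dif_pos j.isLt]
    show ε ≤ _
    rw [heq]
    rw [← hw]
    exact hcon n
  have hCdec : ∀ n : ℕ, {a : ℕ → I |
        ε ≤ Metric.diam (wordComp f (List.ofFn fun j : Fin (n+1) => a j) '' K)} ⊆
      {a : ℕ → I |
        ε ≤ Metric.diam (wordComp f (List.ofFn fun j : Fin n => a j) '' K)} := by
    intro n a ha
    simp only [Set.mem_setOf_eq] at ha ⊢
    refine le_trans ha ?_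
    have := diam_step hK.isBounded hfm (fun j : Fin (n+1) => a j)
    simpa using this
  obtain ⟨a, ha⟩ := IsCompact.nonempty_iInter_of_sequence_nonempty_isCompact_isClosed
    _ hCdec hCne ((hCcl 0).isCompact) hCcl
  have hub : ∀ n : ℕ, ε ≤ Metric.diam
      (wordComp f (List.ofFn fun i : Fin n => a i) '' K) := fun n =>
    Set.mem_iInter.mp ha n
  have : ε ≤ 0 := ge_of_tendsto' (hdiam a) hub
  linarith

noncomputable def phi (n : ℕ) : ℝ := 2 - 2⁻¹ ^ n

lemma one_le_phi (n : ℕ) : 1 ≤ phi n := by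
  have : (2 : ℝ)⁻¹ ^ n ≤ 1 := pow_le_one₀ (by norm_num) (by norm_num)
  unfold phi; linarith

lemma phi_le_two (n : ℕ) : phi n ≤ 2 := by
  have : (0:ℝ) ≤ (2 : ℝ)⁻¹ ^ n := by positivity
  unfold phi; linarith

lemma phi_pos (n : ℕ) : 0 < phi n := lt_of_lt_of_le one_pos (one_le_phi n)

lemma phi_lt_succ (n : ℕ) : phi n < phi (n + 1) := by
  have : (2 : ℝ)⁻¹ ^ (n+1) < (2 : ℝ)⁻¹ ^ n :=
    pow_lt_pow_right_of_lt_one₀ (by norm_num) (by norm_num) (Nat.lt_succ_self n)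
  unfold phi; linarith

lemma phi_zero : phi 0 = 1 := by norm_num [phi]

/-- The contracting metric. -/
noncomputable def dm (f : I → ℝ → ℝ) (x y : ℝ) : ℝ := ⨆ n, phi n * Gs f n x y

lemma bddAbove_dm {f : I → ℝ → ℝ} {K : Set ℝ} (hKb : Bornology.IsBounded K)
    (hfm : ∀ i, Set.MapsTo (f i) K K) {x y : ℝ} (hx : x ∈ K) (hy : y ∈ K) :
    BddAbove (Set.range fun n => phi n * Gs f n x y) := by
  refine ⟨2 * Ds f K 0, ?_⟩
  rintro _ ⟨n, rfl⟩
  exact mul_le_mul (phi_le_two n)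
    (le_trans (Gs_le_Ds hKb hfm hx hy) (Ds_antitone hKb hfm (Nat.zero_le n)))
    (Gs_nonneg f n x y) (by norm_num)

lemma le_dm {f : I → ℝ → ℝ} {K : Set ℝ} (hKb : Bornology.IsBounded K)
    (hfm : ∀ i, Set.MapsTo (f i) K K) (n : ℕ) {x y : ℝ} (hx : x ∈ K) (hy : y ∈ K) :
    phi n * Gs f n x y ≤ dm f x y :=
  le_ciSup (bddAbove_dm hKb hfm hx hy) n

lemma abs_le_dm {f : I → ℝ → ℝ} {K : Set ℝ} (hKb : Bornology.IsBounded K)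
    (hfm : ∀ i, Set.MapsTo (f i) K K) {x y : ℝ} (hx : x ∈ K) (hy : y ∈ K) :
    |x - y| ≤ dm f x y := by
  have := le_dm hKb hfm 0 hx hy
  rwa [phi_zero, Gs_zero, one_mul] at this

lemma dm_contract {f : I → ℝ → ℝ} {K : Set ℝ} (hK : IsCompact K)
    (hfm : ∀ i, Set.MapsTo (f i) K K)
    (hdiam : ∀ a : ℕ → I,
      Filter.Tendsto (fun n : ℕ =>
        Metric.diam (wordComp f (List.ofFn fun i : Fin n => a i) '' K))
        Filter.atTop (nhds 0))
    (i : I) {x y : ℝ} (hx : x ∈ K) (hy : y ∈ K) (hxy : x ≠ y) :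
    dm f (f i x) (f i y) < dm f x y := by
  classical
  have hKb := hK.isBounded
  have habs : 0 < |x - y| := abs_pos.mpr (sub_ne_zero.mpr hxy)
  set s : ℕ → ℝ := fun n => phi n * Gs f (n + 1) x y with hsdef
  have ht' : ∀ n, phi n * Gs f n (f i x) (f i y) ≤ s n := fun n =>
    mul_le_mul_of_nonneg_left (Gs_contract f n i x y) (phi_pos n).le
  by_cases hz : ∀ n, Gs f (n + 1) x y = 0
  · have h1 : dm f (f i x) (f i y) ≤ 0 := by
      apply ciSup_le
      intro n
      have := ht' n
      rw [hsdef] at this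
      simp only [hz n, mul_zero] at this
      exact this
    exact lt_of_le_of_lt h1 (lt_of_lt_of_le habs (abs_le_dm hKb hfm hx hy))
  · push_neg at hz
    obtain ⟨n₀, hn₀⟩ := hz
    have hpos : 0 < s n₀ :=
      mul_pos (phi_pos n₀) (lt_of_le_of_ne (Gs_nonneg f (n₀+1) x y) (Ne.symm hn₀))
    have hstend : Filter.Tendsto s Filter.atTop (nhds 0) := by
      apply squeeze_zero (fun n => mul_nonneg (phi_pos n).le (Gs_nonneg f (n+1) x y))
        (g := fun n => 2 * Ds f K (n + 1))
      · intro n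
        exact mul_le_mul (phi_le_two n) (Gs_le_Ds hKb hfm hx hy)
          (Gs_nonneg f (n+1) x y) (by norm_num)
      · have h1 : Filter.Tendsto (fun n => Ds f K (n + 1)) Filter.atTop (nhds 0) :=
          (Ds_tendsto hK hfm hdiam).comp (Filter.tendsto_add_atTop_nat 1)
        simpa using h1.const_mul 2
    have hev : ∀ᶠ n in Filter.atTop, s n < s n₀ :=
      hstend.eventually_lt_const hpos
    obtain ⟨N, hN⟩ := Filter.eventually_atTop.mp hev
    have hn₀N : n₀ < N := by
      by_contra h
      push_neg at h
      exact absurd (hN n₀ h) (lt_irrefl _)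
    have hrneN : (Finset.range N).Nonempty := ⟨n₀, Finset.mem_range.mpr hn₀N⟩
    obtain ⟨m, hmmem, hm⟩ := Finset.exists_mem_eq_sup' hrneN s
    have hsm : ∀ n, s n ≤ s m := by
      intro n
      by_cases hn : n < N
      · have := Finset.le_sup' s (Finset.mem_range.mpr hn)
        rwa [← hm]
      · push_neg at hn
        have h1 : s n < s n₀ := hN n hn
        have h2 : s n₀ ≤ (Finset.range N).sup' hrneN s :=
          Finset.le_sup' s (Finset.mem_range.mpr hn₀N)
        rw [hm] at h2
        exact (h1.trans_le h2).le
    have hsmpos : 0 < s m := lt_of_lt_of_le hpos (hsm n₀)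
    have hGpos : 0 < Gs f (m + 1) x y := by
      rcases lt_or_eq_of_le (Gs_nonneg f (m+1) x y) with h | h
      · exact h
      · exfalso
        rw [hsdef] at hsmpos
        simp only [← h, mul_zero] at hsmpos
        exact lt_irrefl _ hsmpos
    calc dm f (f i x) (f i y) ≤ s m := ciSup_le fun n => (ht' n).trans (hsm n)
      _ = phi m * Gs f (m + 1) x y := rfl
      _ < phi (m + 1) * Gs f (m + 1) x y :=
          mul_lt_mul_of_pos_right (phi_lt_succ m) hGpos
      _ ≤ dm f x y := le_dm hKb hfm (m + 1) hx hy

lemma dm_continuousOn {f : I → ℝ → ℝ} {K : Set ℝ} (hK : IsCompact K)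
    (hfc : ∀ i, ContinuousOn (f i) K) (hfm : ∀ i, Set.MapsTo (f i) K K)
    (hdiam : ∀ a : ℕ → I,
      Filter.Tendsto (fun n : ℕ =>
        Metric.diam (wordComp f (List.ofFn fun i : Fin n => a i) '' K))
        Filter.atTop (nhds 0)) :
    ContinuousOn (fun p : ℝ × ℝ => dm f p.1 p.2) (K ×ˢ K) := by
  classical
  have hKb := hK.isBounded
  have hrne : ∀ N : ℕ, (Finset.range (N + 1)).Nonempty :=
    fun N => ⟨0, Finset.mem_range.mpr (Nat.succ_pos N)⟩
  set h : ℕ → ℝ × ℝ → ℝ := fun N p =>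
    (Finset.range (N + 1)).sup' (hrne N) (fun n => phi n * Gs f n p.1 p.2) with hhdef
  have hcont : ∀ N, ContinuousOn (h N) (K ×ˢ K) := by
    intro N
    apply continuousOn_finset_sup' (hrne N)
    intro n _
    exact continuousOn_const.mul (Gs_continuousOn hfc hfm n)
  have hunif : TendstoUniformlyOn h (fun p : ℝ × ℝ => dm f p.1 p.2)
      Filter.atTop (K ×ˢ K) := by
    rw [Metric.tendstoUniformlyOn_iff]
    intro ε hε
    have hDs : Filter.Tendsto (fun N => 2 * Ds f K (N + 1)) Filter.atTop (nhds 0) := by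
      have h1 := (Ds_tendsto hK hfm hdiam).comp (Filter.tendsto_add_atTop_nat 1)
      simpa using h1.const_mul 2
    filter_upwards [hDs.eventually_lt_const hε] with N hN p hp
    obtain ⟨hp1, hp2⟩ := Set.mem_prod.mp hp
    have hle : h N p ≤ dm f p.1 p.2 :=
      Finset.sup'_le _ _ fun n _ => le_dm hKb hfm n hp1 hp2
    have hh0 : 0 ≤ h N p := by
      have h1 : phi 0 * Gs f 0 p.1 p.2 ≤ h N p := by
        simp only [hhdef]
        exact Finset.le_sup' (fun n => phi n * Gs f n p.1 p.2)
          (Finset.mem_range.mpr (Nat.succ_pos N))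
      exact le_trans (mul_nonneg (phi_pos 0).le (Gs_nonneg f 0 p.1 p.2)) h1
    have hub : dm f p.1 p.2 ≤ h N p + 2 * Ds f K (N + 1) := by
      apply ciSup_le
      intro n
      by_cases hn : n ≤ N
      · have h1 : phi n * Gs f n p.1 p.2 ≤ h N p := by
          simp only [hhdef]
          exact Finset.le_sup' (fun n => phi n * Gs f n p.1 p.2)
            (Finset.mem_range.mpr (Nat.lt_succ_of_le hn))
        have h2 : (0:ℝ) ≤ 2 * Ds f K (N + 1) :=
          mul_nonneg (by norm_num) (Ds_nonneg f K (N + 1))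
        linarith
      · push_neg at hn
        have h1 : phi n * Gs f n p.1 p.2 ≤ 2 * Ds f K n :=
          mul_le_mul (phi_le_two n) (Gs_le_Ds hKb hfm hp1 hp2)
            (Gs_nonneg f n p.1 p.2) (by norm_num)
        have h2 : Ds f K n ≤ Ds f K (N + 1) := Ds_antitone hKb hfm hn
        linarith
    rw [Real.dist_eq, abs_of_nonneg (by linarith)]
    linarith
  exact hunif.continuousOn (Filter.Eventually.of_forall hcont).frequently

end ECMAux

open ECMAux in
theorem exists_contracting_metric
    {I : Type*} [Fintype I] [Nonempty I]
    (K : Set ℝ) (hK : IsCompact K) (hne : K.Nonempty)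
    (f : I → ℝ → ℝ)
    (hfc : ∀ i, ContinuousOn (f i) K)
    (hfm : ∀ i, Set.MapsTo (f i) K K)
    (hdiam : ∀ a : ℕ → I,
      Tendsto
        (fun n : ℕ =>
          Metric.diam (wordComp f (List.ofFn fun i : Fin n => a i) '' K))
        atTop (𝓝 0)) :
    ∃ d : ℝ → ℝ → ℝ,
      ContinuousOn (fun p : ℝ × ℝ => d p.1 p.2) (K ×ˢ K) ∧
      (∀ x ∈ K, ∀ y ∈ K, 0 ≤ d x y) ∧
      (∀ x ∈ K, ∀ y ∈ K, (d x y = 0 ↔ x = y)) ∧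
      (∀ x ∈ K, ∀ y ∈ K, d x y = d y x) ∧
      (∀ x ∈ K, ∀ y ∈ K, ∀ z ∈ K, d x z ≤ d x y + d y z) ∧
      (∀ i, ∀ x ∈ K, ∀ y ∈ K, x ≠ y → d (f i x) (f i y) < d x y) := by
  classical
  have hKb := hK.isBounded
  refine ⟨dm f, dm_continuousOn hK hfc hfm hdiam, ?_, ?_, ?_, ?_, ?_⟩
  · intro x hx y hy
    exact le_trans (abs_nonneg _) (abs_le_dm hKb hfm hx hy)
  · intro x hx y hy
    constructor
    · intro h
      have h1 := abs_le_dm hKb hfm hx hy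
      rw [h] at h1
      have h2 : |x - y| = 0 := le_antisymm h1 (abs_nonneg _)
      have := abs_eq_zero.mp h2
      linarith [sub_eq_zero.mp this]
    · rintro rfl
      unfold dm
      simp only [Gs_self, mul_zero]
      exact ciSup_const
  · intro x hx y hy
    unfold dm
    exact iSup_congr fun n => by rw [Gs_symm]
  · intro x hx y hy z hz
    apply ciSup_le
    intro n
    calc phi n * Gs f n x z ≤ phi n * (Gs f n x y + Gs f n y z) :=
          mul_le_mul_of_nonneg_left (Gs_triangle f n x y z) (phi_pos n).le
      _ = phi n * Gs f n x y + phi n * Gs f n y z := mul_add _ _ _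
      _ ≤ dm f x y + dm f y z :=
          add_le_add (le_dm hKb hfm n hx hy) (le_dm hKb hfm n hy hz)
  · intro i x hx y hy hxy
    exact dm_contract hK hfm hdiam i hx hy hxy
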